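/- Let f : ℝⁿ → ℝ be twice continuously differentiable with ∇²f Lipschitz continuous with constant L_H in the operator norm. Let μ ∈ (0, 1], β ∈ (0, 1), x ∈ ℝⁿ with x > 0 componentwise, and d ∈ ℝⁿ with ‖X⁻¹X̄d‖∞ ≤ β. Define g = X̄(∇f(x) − μX⁻¹e) and H = X̄(∇²f(x) + μX⁻²)X̄. Then for every α ∈ [0, 1], φ_μ(x + αX̄d) − φ_μ(x) ≤ α·gᵀd + (α²/2)·dᵀHd + ((L_H(1 − β)² + (2 − β))/(6(1 − β)²))·α³·‖d‖³. -/

import Mathlib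

open Matrix

/-- The Euclidean norm of a vector in `Fin n → ℝ`. -/
noncomputable def euclNorm {n : ℕ} (v : Fin n → ℝ) : ℝ := Real.sqrt (∑ i, (v i)^2)

/-- The operator norm (induced by the Euclidean norm) of a matrix. -/
noncomputable def opNorm {n : ℕ} (A : Matrix (Fin n) (Fin n) ℝ) : ℝ :=
  ‖Matrix.toEuclideanCLM (𝕜 := ℝ) A‖

/-- The continuous linear map `w ↦ ∑ i, v i * w i`. -/
noncomputable def dotCLM {n : ℕ} (v : Fin n → ℝ) : (Fin n → ℝ) →L[ℝ] ℝ :=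
  ∑ i, v i • (ContinuousLinearMap.proj i : (Fin n → ℝ) →L[ℝ] ℝ)

/-- The continuous linear map `w ↦ A *ᵥ w`. -/
noncomputable def mulVecCLM {n : ℕ} (A : Matrix (Fin n) (Fin n) ℝ) :
    (Fin n → ℝ) →L[ℝ] (Fin n → ℝ) :=
  LinearMap.toContinuousLinearMap A.mulVecLin

set_option maxHeartbeats 1000000

lemma dotCLM_apply {n : ℕ} (v w : Fin n → ℝ) : dotCLM v w = v ⬝ᵥ w := by
  simp [dotCLM, dotProduct]

lemma mulVecCLM_apply {n : ℕ} (A : Matrix (Fin n) (Fin n) ℝ) (w : Fin n → ℝ) :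
    mulVecCLM A w = A *ᵥ w := rfl

lemma euclNorm_eq {n : ℕ} (v : Fin n → ℝ) :
    euclNorm v = ‖(WithLp.equiv 2 (Fin n → ℝ)).symm v‖ := by
  rw [EuclideanSpace.norm_eq]
  simp [euclNorm, Real.norm_eq_abs, sq_abs]

lemma euclNorm_nonneg {n : ℕ} (v : Fin n → ℝ) : 0 ≤ euclNorm v := Real.sqrt_nonneg _

lemma euclNorm_smul {n : ℕ} (c : ℝ) (v : Fin n → ℝ) :
    euclNorm (c • v) = |c| * euclNorm v := by
  rw [euclNorm_eq, euclNorm_eq v]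
  rw [show (WithLp.equiv 2 (Fin n → ℝ)).symm (c • v) =
    c • (WithLp.equiv 2 (Fin n → ℝ)).symm v from rfl]
  rw [norm_smul, Real.norm_eq_abs]

lemma abs_dot_mulVec_le {n : ℕ} (A : Matrix (Fin n) (Fin n) ℝ) (a b : Fin n → ℝ) :
    |a ⬝ᵥ (A *ᵥ b)| ≤ opNorm A * euclNorm a * euclNorm b := by
  set a' := (WithLp.equiv 2 (Fin n → ℝ)).symm a
  set b' := (WithLp.equiv 2 (Fin n → ℝ)).symm b
  have h1 : a ⬝ᵥ (A *ᵥ b) = inner ℝ a' ((Matrix.toEuclideanCLM (𝕜 := ℝ) A) b') := by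
    rw [show b' = WithLp.toLp 2 b from rfl, Matrix.toEuclideanCLM_toLp]
    simp [a', PiLp.inner_apply, dotProduct, mul_comm]
  rw [h1, euclNorm_eq, euclNorm_eq]
  calc |inner ℝ a' ((Matrix.toEuclideanCLM (𝕜 := ℝ) A) b')|
      ≤ ‖a'‖ * ‖(Matrix.toEuclideanCLM (𝕜 := ℝ) A) b'‖ := abs_real_inner_le_norm _ _
    _ ≤ ‖a'‖ * (opNorm A * ‖b'‖) := by
        gcongr
        exact ContinuousLinearMap.le_opNorm _ _
    _ = opNorm A * ‖a'‖ * ‖b'‖ := by ring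

lemma log_deriv_aux {t : ℝ} (ht : (1:ℝ) + t ≠ 0) :
    HasDerivAt (fun t : ℝ => Real.log (1 + t)) ((1 + t)⁻¹) t := by
  have h1 : HasDerivAt (fun t : ℝ => (1:ℝ) + t) 1 t := (hasDerivAt_id t).const_add 1
  simpa using h1.log ht

lemma log_taylor_lower {β : ℝ} (hβ : β ∈ Set.Ioo (0:ℝ) 1) {s : ℝ} (hs : |s| ≤ β) :
    s - s^2/2 - |s|^3 / (3*(1-β)) ≤ Real.log (1+s) := by
  obtain ⟨hβ0, hβ1⟩ := hβ
  have h1β : 0 < 1 - β := by linarith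
  rcases le_or_gt 0 s with h0 | h0
  · -- s ≥ 0 : log(1+s) ≥ s - s²/2
    have key : ∀ r : ℝ, 0 ≤ r → r - r^2/2 ≤ Real.log (1+r) := by
      intro r hr
      set F : ℝ → ℝ := fun t => Real.log (1+t) - t + t^2/2 with hF
      have hFd : ∀ t : ℝ, 0 ≤ t → HasDerivAt F ((1+t)⁻¹ - 1 + t) t := by
        intro t ht
        exact ((log_deriv_aux (by linarith)).sub (hasDerivAt_id t)).add
          (by simpa using (hasDerivAt_pow 2 t).div_const 2)
      have hmono : MonotoneOn F (Set.Ici (0:ℝ)) := by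
        apply monotoneOn_of_hasDerivWithinAt_nonneg (convex_Ici 0)
          (fun t ht => (hFd t ht).continuousAt.continuousWithinAt)
          (fun t ht => (hFd t (by rw [interior_Ici] at ht; exact ht.le)).hasDerivWithinAt)
        intro t ht
        rw [interior_Ici] at ht
        have h1t : (0:ℝ) < 1 + t := by linarith [Set.mem_Ioi.mp ht]
        have : (1+t)⁻¹ - 1 + t = t^2/(1+t) := by field_simp; ring
        rw [this]
        exact div_nonneg (sq_nonneg t) h1t.le
      have := hmono Set.self_mem_Ici (Set.mem_Ici.mpr hr) hr
      simp only [hF] at this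
      simp only [add_zero, Real.log_one] at this
      nlinarith [this]
    have h2 := key s h0
    have h3 : 0 ≤ |s|^3 / (3*(1-β)) := by positivity
    linarith
  · -- s < 0, s ≥ -β
    have hsβ : -β ≤ s := by
      rw [abs_le] at hs; exact hs.1
    set c : ℝ := (3*(1-β))⁻¹ with hc
    set G : ℝ → ℝ := fun t => Real.log (1+t) - t + t^2/2 - c * t^3 with hG
    have hGd : ∀ t : ℝ, t ∈ Set.Icc (-β) 0 →
        HasDerivAt G ((1+t)⁻¹ - 1 + t - c * (3 * t^2)) t := by
      intro t ht
      have h1t : 0 < 1 + t := by linarith [ht.1]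
      have := (((log_deriv_aux h1t.ne').sub (hasDerivAt_id t)).add
        (by simpa using (hasDerivAt_pow 2 t).div_const 2 : HasDerivAt (fun t : ℝ => t^2/2) t t)).sub
        ((hasDerivAt_pow 3 t).const_mul c)
      refine this.congr_deriv ?_
      ring
    have hanti : AntitoneOn G (Set.Icc (-β) 0) := by
      apply antitoneOn_of_hasDerivWithinAt_nonpos (convex_Icc _ _)
        (fun t ht => (hGd t ht).continuousAt.continuousWithinAt)
        (fun t ht => (hGd t (interior_subset ht)).hasDerivWithinAt)
      intro t ht
      rw [interior_Icc] at ht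
      obtain ⟨ht1, ht2⟩ := ht
      have h1t : 0 < 1 + t := by linarith
      have e1 : (1+t)⁻¹ - 1 + t = t^2/(1+t) := by field_simp; ring
      have e2 : c * (3 * t^2) = t^2/(1-β) := by rw [hc]; field_simp
      rw [e1, e2]
      have : t^2/(1+t) ≤ t^2/(1-β) :=
        div_le_div_of_nonneg_left (by positivity) h1β (by linarith)
      linarith
    have hmem : s ∈ Set.Icc (-β) (0:ℝ) := ⟨hsβ, h0.le⟩
    have h2 := hanti hmem (Set.right_mem_Icc.mpr (by linarith)) h0.le
    have hG0 : G 0 = 0 := by simp [hG]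
    rw [hG0] at h2
    -- h2 : 0 ≤ G s
    have habs : |s|^3 = -(s^3) := by
      rw [abs_of_neg h0]; ring
    simp only [hG] at h2
    have e : -s^3/(3*(1-β)) = -(c * s^3) := by rw [hc]; field_simp
    rw [habs, e]
    linarith [h2]

lemma taylor_f {n : ℕ}
    (f : (Fin n → ℝ) → ℝ)
    (gradf : (Fin n → ℝ) → (Fin n → ℝ))
    (hessf : (Fin n → ℝ) → Matrix (Fin n) (Fin n) ℝ)
    (hgrad : ∀ y : Fin n → ℝ, HasFDerivAt f (dotCLM (gradf y)) y)
    (hhess : ∀ y : Fin n → ℝ, HasFDerivAt gradf (mulVecCLM (hessf y)) y)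
    (L_H : ℝ)
    (hlip : ∀ y z : Fin n → ℝ, opNorm (hessf y - hessf z) ≤ L_H * euclNorm (y - z))
    (x v : Fin n → ℝ) :
    f (x + v) ≤ f x + gradf x ⬝ᵥ v + (1/2) * (v ⬝ᵥ (hessf x *ᵥ v))
      + L_H / 6 * euclNorm v ^ 3 := by
  set γ : ℝ → (Fin n → ℝ) := fun s => x + s • v with hγdef
  have hγ : ∀ s : ℝ, HasDerivAt γ v s := by
    intro s
    have h1 : HasDerivAt (fun s : ℝ => s • v) ((1:ℝ) • v) s :=
      (hasDerivAt_id s).smul_const v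
    have h2 := h1.const_add x
    rw [one_smul] at h2
    exact h2
  have hγx : ∀ s : ℝ, γ s - x = s • v := fun s => by simp [hγdef]
  set Q : ℝ := v ⬝ᵥ (hessf x *ᵥ v) with hQdef
  set N : ℝ := euclNorm v with hNdef
  have hN : 0 ≤ N := euclNorm_nonneg v
  -- first derivative of f ∘ γ
  have hψ : ∀ s : ℝ, HasDerivAt (fun s => f (γ s)) (gradf (γ s) ⬝ᵥ v) s := by
    intro s
    have := (hgrad (γ s)).comp_hasDerivAt s (hγ s)
    rw [dotCLM_apply] at this
    exact this
  -- derivative of s ↦ gradf (γ s) ⬝ᵥ v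
  have hψ' : ∀ s : ℝ, HasDerivAt (fun s => gradf (γ s) ⬝ᵥ v) (v ⬝ᵥ (hessf (γ s) *ᵥ v)) s := by
    intro s
    have h2 : HasDerivAt (fun s => gradf (γ s)) (mulVecCLM (hessf (γ s)) v) s :=
      (hhess (γ s)).comp_hasDerivAt s (hγ s)
    have h3 := ((dotCLM v).hasFDerivAt.comp_hasDerivAt s h2)
    simp only [Function.comp_def, mulVecCLM_apply, dotCLM_apply] at h3
    have h4 : (fun r => v ⬝ᵥ gradf (γ r)) = fun r => gradf (γ r) ⬝ᵥ v := by
      funext r; rw [dotProduct_comm]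
    rwa [h4] at h3
  -- second-level auxiliary function
  set u₂ : ℝ → ℝ := fun s => gradf (γ s) ⬝ᵥ v - gradf x ⬝ᵥ v - s * Q - L_H * N^3 / 2 * s^2
    with hu₂def
  have hu₂d : ∀ s : ℝ, HasDerivAt u₂ (v ⬝ᵥ (hessf (γ s) *ᵥ v) - Q - L_H * N^3 * s) s := by
    intro s
    have h := (((hψ' s).sub_const (gradf x ⬝ᵥ v)).sub (hasDerivAt_mul_const Q)).sub
      (((hasDerivAt_pow 2 s)).const_mul (L_H * N^3 / 2))
    refine h.congr_deriv ?_
    ring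
  have hu₂le : ∀ s : ℝ, 0 < s → v ⬝ᵥ (hessf (γ s) *ᵥ v) - Q - L_H * N^3 * s ≤ 0 := by
    intro s hs
    have hdiff : v ⬝ᵥ (hessf (γ s) *ᵥ v) - Q = v ⬝ᵥ ((hessf (γ s) - hessf x) *ᵥ v) := by
      rw [Matrix.sub_mulVec, dotProduct_sub, hQdef]
    rw [hdiff]
    have h1 : v ⬝ᵥ ((hessf (γ s) - hessf x) *ᵥ v) ≤ opNorm (hessf (γ s) - hessf x) * N * N :=
      le_trans (le_abs_self _) (abs_dot_mulVec_le _ _ _)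
    have h2 : opNorm (hessf (γ s) - hessf x) ≤ L_H * (s * N) := by
      have := hlip (γ s) x
      rwa [hγx s, euclNorm_smul, abs_of_pos hs] at this
    have h3 : opNorm (hessf (γ s) - hessf x) * N * N ≤ L_H * (s * N) * N * N := by
      have h0 : (0:ℝ) ≤ opNorm (hessf (γ s) - hessf x) := by
        have := abs_nonneg ((0: Fin n → ℝ) ⬝ᵥ ((hessf (γ s) - hessf x) *ᵥ 0))
        exact norm_nonneg _
      exact mul_le_mul_of_nonneg_right (mul_le_mul_of_nonneg_right h2 hN) hN
    nlinarith [h1, h3]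
  have hu₂anti : AntitoneOn u₂ (Set.Ici (0:ℝ)) := by
    apply antitoneOn_of_hasDerivWithinAt_nonpos (convex_Ici 0)
      (fun s _ => (hu₂d s).continuousAt.continuousWithinAt)
      (fun s hs => (hu₂d s).hasDerivWithinAt)
    intro s hs
    rw [interior_Ici] at hs
    exact hu₂le s hs
  have hu₂0 : u₂ 0 = 0 := by simp [hu₂def, hγdef]
  have hu₂nonpos : ∀ s : ℝ, 0 ≤ s → u₂ s ≤ 0 := by
    intro s hs
    have := hu₂anti (Set.self_mem_Ici) hs hs
    rwa [hu₂0] at this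
  -- first-level auxiliary function
  set u₁ : ℝ → ℝ := fun s => f (γ s) - f x - s * (gradf x ⬝ᵥ v) - s^2 / 2 * Q
    - L_H * N^3 / 6 * s^3 with hu₁def
  have hu₁d : ∀ s : ℝ, HasDerivAt u₁ (u₂ s) s := by
    intro s
    have h := ((((hψ s).sub_const (f x)).sub (hasDerivAt_mul_const (gradf x ⬝ᵥ v))).sub
      ((hasDerivAt_pow 2 s).const_mul (Q / 2))).sub
      ((hasDerivAt_pow 3 s).const_mul (L_H * N^3 / 6))
    have he : (fun s : ℝ => f (γ s) - f x - s * (gradf x ⬝ᵥ v) - Q / 2 * s ^ 2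
        - L_H * N^3 / 6 * s^3) = u₁ := by
      funext s; rw [hu₁def]; ring
    rw [← he]
    refine h.congr_deriv ?_
    rw [hu₂def]
    push_cast
    ring
  have hu₁anti : AntitoneOn u₁ (Set.Ici (0:ℝ)) := by
    apply antitoneOn_of_hasDerivWithinAt_nonpos (convex_Ici 0)
      (fun s _ => (hu₁d s).continuousAt.continuousWithinAt)
      (fun s hs => (hu₁d s).hasDerivWithinAt)
    intro s hs
    rw [interior_Ici] at hs
    exact hu₂nonpos s hs.le
  have h10 : u₁ 1 ≤ u₁ 0 := hu₁anti Set.self_mem_Ici (by norm_num) (by norm_num)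
  have hu₁0 : u₁ 0 = 0 := by simp [hu₁def, hγdef]
  rw [hu₁0] at h10
  have hγ1 : γ 1 = x + v := by simp [hγdef]
  rw [hu₁def] at h10
  simp only [hγ1] at h10
  nlinarith [h10]

/-- let `f` be twice continuously differentiable with gradient `gradf` and
Hessian `hessf`, with `hessf` Lipschitz of constant `L_H` in the operator norm.
For `μ ∈ (0,1]`, `β ∈ (0,1)`, `x > 0`, and `d` with `‖X⁻¹X̄d‖∞ ≤ β`, setting
`g = X̄(∇f(x) − μX⁻¹e)` and `H = X̄(∇²f(x) + μX⁻²)X̄`, for every `α ∈ [0,1]`: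
`φ_μ(x + αX̄d) − φ_μ(x) ≤ α gᵀd + (α²/2) dᵀHd + ((L_H(1−β)² + (2−β))/(6(1−β)²)) α³ ‖d‖³`,
where `φ_μ(y) = f(y) − μ Σᵢ log yᵢ` and `‖d‖` is the Euclidean norm. -/
theorem stmt7 {n : ℕ}
    (f : (Fin n → ℝ) → ℝ)
    (gradf : (Fin n → ℝ) → (Fin n → ℝ))
    (hessf : (Fin n → ℝ) → Matrix (Fin n) (Fin n) ℝ)
    (hgrad : ∀ y : Fin n → ℝ, HasFDerivAt f (dotCLM (gradf y)) y)
    (hhess : ∀ y : Fin n → ℝ, HasFDerivAt gradf (mulVecCLM (hessf y)) y)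
    (hhesscont : Continuous hessf)
    (L_H : ℝ) (hLH : 0 ≤ L_H)
    (hlip : ∀ y z : Fin n → ℝ, opNorm (hessf y - hessf z) ≤ L_H * euclNorm (y - z))
    (μ : ℝ) (hμ : μ ∈ Set.Ioc (0:ℝ) 1)
    (β : ℝ) (hβ : β ∈ Set.Ioo (0:ℝ) 1)
    (x : Fin n → ℝ) (hx : ∀ i, 0 < x i)
    (d : Fin n → ℝ)
    (hd : ‖(fun i => (min (x i) 1 / x i) * d i : Fin n → ℝ)‖ ≤ β)
    (g : Fin n → ℝ)
    (hg : g = fun i => min (x i) 1 * (gradf x i - μ / x i))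
    (H : Matrix (Fin n) (Fin n) ℝ)
    (hH : H = Matrix.diagonal (fun i => min (x i) 1)
        * (hessf x + μ • Matrix.diagonal (fun i => ((x i)^2)⁻¹))
        * Matrix.diagonal (fun i => min (x i) 1)) :
    ∀ α ∈ Set.Icc (0:ℝ) 1,
      (f (x + α • (fun i => min (x i) 1 * d i : Fin n → ℝ))
          - μ * ∑ i, Real.log ((x + α • (fun i => min (x i) 1 * d i : Fin n → ℝ)) i))
        - (f x - μ * ∑ i, Real.log (x i))
      ≤ α * (g ⬝ᵥ d) + (α^2/2) * (d ⬝ᵥ (H *ᵥ d))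
        + ((L_H * (1-β)^2 + (2-β)) / (6 * (1-β)^2)) * α^3 * euclNorm d ^ 3 := by
  obtain ⟨hβ0, hβ1⟩ := hβ
  obtain ⟨hμ0, hμ1⟩ := hμ
  have h1β : (0:ℝ) < 1 - β := by linarith
  intro α hα
  obtain ⟨hα0, hα1⟩ := hα
  set p : Fin n → ℝ := fun i => min (x i) 1 * d i with hp
  set t : Fin n → ℝ := fun i => (min (x i) 1 / x i) * d i with htdef
  have hxb : ∀ i, 0 < min (x i) 1 := fun i => lt_min (hx i) one_pos
  have ht : ∀ i, |t i| ≤ β := by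
    intro i
    have h := (pi_norm_le_iff_of_nonneg hβ0.le).mp hd i
    rwa [Real.norm_eq_abs] at h
  have hαt : ∀ i, |α * t i| ≤ β := by
    intro i
    rw [abs_mul, abs_of_nonneg hα0]
    calc α * |t i| ≤ 1 * |t i| := by
          have := abs_nonneg (t i); nlinarith
      _ = |t i| := one_mul _
      _ ≤ β := ht i
  have hpos : ∀ i, 0 < 1 + α * t i := by
    intro i
    have := abs_le.mp (hαt i)
    linarith [this.1]
  have hyi : ∀ i, (x + α • p) i = x i * (1 + α * t i) := by
    intro i
    have hxi := (hx i).ne'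
    simp only [Pi.add_apply, Pi.smul_apply, hp, htdef, smul_eq_mul]
    field_simp
  have hlogsum : ∑ i, Real.log ((x + α • p) i)
      = ∑ i, Real.log (x i) + ∑ i, Real.log (1 + α * t i) := by
    rw [← Finset.sum_add_distrib]
    exact Finset.sum_congr rfl fun i _ => by
      rw [hyi i, Real.log_mul (hx i).ne' (hpos i).ne']
  -- identities for g and H
  have hgd : g ⬝ᵥ d = gradf x ⬝ᵥ p - μ * ∑ i, t i := by
    rw [hg, dotProduct, dotProduct, Finset.mul_sum, ← Finset.sum_sub_distrib]
    exact Finset.sum_congr rfl fun i _ => by simp only [hp, htdef]; ring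
  have hdHd : d ⬝ᵥ (H *ᵥ d) = p ⬝ᵥ (hessf x *ᵥ p) + μ * ∑ i, (t i)^2 := by
    rw [hH]
    rw [← Matrix.mulVec_mulVec, ← Matrix.mulVec_mulVec]
    have hDd : (Matrix.diagonal (fun i => min (x i) 1)) *ᵥ d = p := by
      funext i; rw [Matrix.mulVec_diagonal]
    rw [hDd]
    have hdD : ∀ w : Fin n → ℝ,
        d ⬝ᵥ ((Matrix.diagonal (fun i => min (x i) 1)) *ᵥ w) = p ⬝ᵥ w := by
      intro w
      rw [dotProduct, dotProduct]
      exact Finset.sum_congr rfl fun i _ => by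
        rw [Matrix.mulVec_diagonal]; simp only [hp]; ring
    have hq : p ⬝ᵥ ((Matrix.diagonal fun i => ((x i)^2)⁻¹) *ᵥ p) = ∑ i, (t i)^2 := by
      rw [dotProduct]
      refine Finset.sum_congr rfl fun i _ => ?_
      rw [Matrix.mulVec_diagonal]
      simp only [hp, htdef]
      have hxi := (hx i).ne'
      field_simp
    rw [hdD, Matrix.add_mulVec, Matrix.smul_mulVec, dotProduct_add, dotProduct_smul,
      smul_eq_mul, hq]
  -- norm facts
  have hd2 : euclNorm d ^ 2 = ∑ i, (d i)^2 := by
    rw [euclNorm]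
    exact Real.sq_sqrt (Finset.sum_nonneg fun i _ => sq_nonneg _)
  have habsd : ∀ i, |d i| ≤ euclNorm d := by
    intro i
    rw [euclNorm, ← Real.sqrt_sq_eq_abs]
    exact Real.sqrt_le_sqrt (Finset.single_le_sum (fun j _ => sq_nonneg (d j))
      (Finset.mem_univ i))
  have hpd : euclNorm p ≤ euclNorm d := by
    apply Real.sqrt_le_sqrt
    apply Finset.sum_le_sum
    intro i _
    simp only [hp]
    have h1 : min (x i) 1 ≤ 1 := min_le_right _ _
    have h2 : 0 < min (x i) 1 := hxb i
    have h3 : (min (x i) 1)^2 ≤ 1 := by nlinarith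
    have h4 := mul_le_mul_of_nonneg_right h3 (sq_nonneg (d i))
    nlinarith [h4]
  have htd : ∀ i, |t i| ≤ |d i| := by
    intro i
    simp only [htdef, abs_mul]
    have h1 : min (x i) 1 / x i ≤ 1 := by
      rw [div_le_one (hx i)]; exact min_le_left _ _
    have h2 : 0 ≤ min (x i) 1 / x i := le_of_lt (div_pos (hxb i) (hx i))
    calc |min (x i) 1 / x i| * |d i| = (min (x i) 1 / x i) * |d i| := by
          rw [abs_of_nonneg h2]
      _ ≤ 1 * |d i| := mul_le_mul_of_nonneg_right h1 (abs_nonneg _)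
      _ = |d i| := one_mul _
  have hcube : ∑ i, |t i|^3 ≤ euclNorm d ^ 3 := by
    have step1 : ∑ i, |t i|^3 ≤ ∑ i, |d i|^3 :=
      Finset.sum_le_sum fun i _ => pow_le_pow_left₀ (abs_nonneg _) (htd i) 3
    have step2 : ∑ i, |d i|^3 ≤ ∑ i, euclNorm d * (d i)^2 := by
      apply Finset.sum_le_sum
      intro i _
      have : |d i|^3 = |d i| * (d i)^2 := by rw [← sq_abs]; ring
      rw [this]
      exact mul_le_mul_of_nonneg_right (habsd i) (sq_nonneg _)
    have step3 : ∑ i, euclNorm d * (d i)^2 = euclNorm d ^3 := by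
      rw [← Finset.mul_sum, ← hd2]; ring
    linarith
  -- Taylor bound for f
  have hT := taylor_f f gradf hessf hgrad hhess L_H hlip x (α • p)
  rw [Matrix.mulVec_smul, dotProduct_smul, dotProduct_smul, smul_dotProduct, euclNorm_smul,
    abs_of_nonneg hα0, smul_eq_mul, smul_eq_mul, smul_eq_mul] at hT
  -- log sum lower bound
  have hS : α * (∑ i, t i) - α^2/2 * (∑ i, (t i)^2)
      - α^3 / (3*(1-β)) * (∑ i, |t i|^3) ≤ ∑ i, Real.log (1 + α * t i) := by
    have hterm : ∀ i, α * t i - α^2/2 * (t i)^2 - α^3/(3*(1-β)) * |t i|^3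
        ≤ Real.log (1 + α * t i) := by
      intro i
      have := log_taylor_lower ⟨hβ0, hβ1⟩ (hαt i)
      have he : α * t i - (α * t i)^2/2 - |α * t i|^3/(3*(1-β))
          = α * t i - α^2/2 * (t i)^2 - α^3/(3*(1-β)) * |t i|^3 := by
        rw [abs_mul, abs_of_nonneg hα0, mul_pow]
        ring
      linarith [he ▸ this]
    calc α * (∑ i, t i) - α^2/2 * (∑ i, (t i)^2) - α^3/(3*(1-β)) * (∑ i, |t i|^3)
        = ∑ i, (α * t i - α^2/2 * (t i)^2 - α^3/(3*(1-β)) * |t i|^3) := by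
          rw [Finset.sum_sub_distrib, Finset.sum_sub_distrib, ← Finset.mul_sum,
            ← Finset.mul_sum, ← Finset.mul_sum]
      _ ≤ ∑ i, Real.log (1 + α * t i) := Finset.sum_le_sum fun i _ => hterm i
  -- coefficient facts
  have hC : (L_H * (1-β)^2 + (2-β)) / (6 * (1-β)^2)
      = L_H/6 + (2-β)/(6*(1-β)^2) := by
    field_simp
  -- nonneg facts
  have hα3 : 0 ≤ α^3 := pow_nonneg hα0 3
  have hsum0 : 0 ≤ ∑ i, |t i|^3 := Finset.sum_nonneg fun i _ => pow_nonneg (abs_nonneg _) 3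
  have hf0 : 0 ≤ α^3/(3*(1-β)) := div_nonneg hα3 (by linarith)
  have hNd3 : 0 ≤ euclNorm d ^ 3 := pow_nonneg (euclNorm_nonneg d) 3
  have hNp3 : euclNorm p ^ 3 ≤ euclNorm d ^ 3 := pow_le_pow_left₀ (euclNorm_nonneg p) hpd 3
  have he : L_H/6 * (α * euclNorm p)^3 ≤ L_H/6 * α^3 * euclNorm d^3 := by
    have h1 : (α * euclNorm p)^3 = α^3 * euclNorm p ^3 := by ring
    have h2 : α^3 * euclNorm p ^3 ≤ α^3 * euclNorm d ^3 :=
      mul_le_mul_of_nonneg_left hNp3 hα3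
    have h3 : (0:ℝ) ≤ L_H/6 := by linarith
    calc L_H/6 * (α * euclNorm p)^3 = L_H/6 * (α^3 * euclNorm p^3) := by rw [h1]
      _ ≤ L_H/6 * (α^3 * euclNorm d^3) := mul_le_mul_of_nonneg_left h2 h3
      _ = L_H/6 * α^3 * euclNorm d^3 := by ring
  have hlog2 : μ*α*(∑ i, t i) - μ*(α^2/2)*(∑ i, (t i)^2)
      - μ*(α^3/(3*(1-β)))*(∑ i, |t i|^3) ≤ μ * ∑ i, Real.log (1 + α * t i) := by
    have h := mul_le_mul_of_nonneg_left hS hμ0.le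
    nlinarith [h]
  have hc3 : μ*(α^3/(3*(1-β)))*(∑ i, |t i|^3)
      ≤ (2-β)/(6*(1-β)^2) * α^3 * euclNorm d ^3 := by
    have h1 : μ * (α^3/(3*(1-β))) ≤ α^3/(3*(1-β)) := by
      have := mul_le_mul_of_nonneg_right hμ1 hf0
      linarith
    have h2 : α^3/(3*(1-β)) * (∑ i, |t i|^3) ≤ α^3/(3*(1-β)) * euclNorm d^3 :=
      mul_le_mul_of_nonneg_left hcube hf0
    have hinv : (3*(1-β))⁻¹ ≤ (2-β)/(6*(1-β)^2) := by
      rw [show (3*(1-β))⁻¹ = 1/(3*(1-β)) from (one_div _).symm,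
        div_le_div_iff₀ (by linarith) (by positivity)]
      nlinarith
    have hcc : α^3/(3*(1-β)) ≤ (2-β)/(6*(1-β)^2) * α^3 := by
      rw [div_eq_mul_inv]
      calc α^3 * (3*(1-β))⁻¹ ≤ α^3 * ((2-β)/(6*(1-β)^2)) :=
            mul_le_mul_of_nonneg_left hinv hα3
        _ = (2-β)/(6*(1-β)^2) * α^3 := by ring
    have h3 : α^3/(3*(1-β)) * euclNorm d^3 ≤ (2-β)/(6*(1-β)^2) * α^3 * euclNorm d^3 :=
      mul_le_mul_of_nonneg_right hcc hNd3
    calc μ*(α^3/(3*(1-β)))*(∑ i, |t i|^3)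
        ≤ α^3/(3*(1-β)) * (∑ i, |t i|^3) := mul_le_mul_of_nonneg_right h1 hsum0
      _ ≤ α^3/(3*(1-β)) * euclNorm d^3 := h2
      _ ≤ (2-β)/(6*(1-β)^2) * α^3 * euclNorm d^3 := h3
  rw [hlogsum, hgd, hdHd, hC]
  linarith [hT, he, hlog2, hc3]
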